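/- Let d ≥ 2 and let G = (V,E) be a finite simple graph without isolated vertices that admits a K_d-edge partition 𝒫 with cost(𝒫) = k ≥ 1. Then there exist a vertex u ∈ V and disjoint sets A, B with A ∪ B = N_G(u) such that the split of G at u along (A,B) (an exclusive vertex split, producing a graph G₁ on |V| + 1 vertices) admits a K_d-edge partition 𝒫′ with cost(𝒫′) = k − 1. -/

import Mathlib

namespace Paper

/-- A `K_d`-edge partition of `G`, represented by the vertex sets of its parts:
a family `P` of cliques on exactly `d` vertices such that every edge of `G` lies in the
edge set of exactly one member of `P` (so the edge sets of the members of `P` partition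
the edge set of `G`). -/
def KEdgePartition {V : Type*} (G : SimpleGraph V) (d : ℕ) (P : Finset (Finset V)) : Prop :=
  (∀ Q ∈ P, G.IsClique (Q : Set V) ∧ Q.card = d) ∧
  (∀ x y : V, G.Adj x y → ∃! Q : Finset V, Q ∈ P ∧ x ∈ Q ∧ y ∈ Q)

/-- `freq_𝒫(v)`: the number of parts of `𝒫` containing an edge incident to `v`,
i.e. the number of members of `P` containing `v`. -/
def freqP {V : Type*} [DecidableEq V] (P : Finset (Finset V)) (v : V) : ℕ :=
  (P.filter fun Q => v ∈ Q).card

/-- `cost(𝒫) = Σ_v max(0, freq_𝒫(v) - 1)`. -/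
def costP {V : Type*} [Fintype V] [DecidableEq V] (P : Finset (Finset V)) : ℕ :=
  ∑ v : V, (freqP P v - 1)
/-- The split of `G` at `u` along `(A, B)`: a fresh vertex `none` is added; the copy `u`
keeps exactly the neighbors in `A`, the new copy `none` gets exactly the neighbors in `B`,
the two copies are non-adjacent, and all other adjacencies are unchanged. -/
def splitGraph {V : Type*} (G : SimpleGraph V) (u : V) (A B : Set V) :
    SimpleGraph (Option V) where
  Adj x y :=
    match x, y with
    | some a, some b =>
        (a ≠ u ∧ b ≠ u ∧ G.Adj a b) ∨ (a = u ∧ b ≠ u ∧ b ∈ A) ∨ (b = u ∧ a ≠ u ∧ a ∈ A)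
    | some a, none => a ≠ u ∧ a ∈ B
    | none, some b => b ≠ u ∧ b ∈ B
    | none, none => False
  symm := by
    constructor
    rintro (_ | a) (_ | b) h
    · exact h
    · exact h
    · exact h
    · rcases h with ⟨h1, h2, h3⟩ | ⟨h1, h2, h3⟩ | ⟨h1, h2, h3⟩
      · exact Or.inl ⟨h2, h1, h3.symm⟩
      · exact Or.inr (Or.inr ⟨h1, h2, h3⟩)
      · exact Or.inr (Or.inl ⟨h1, h2, h3⟩)
  loopless := by
    constructor
    rintro (_ | a) h
    · exact h
    · rcases h with ⟨_, _, h3⟩ | ⟨h1, h2, _⟩ | ⟨h1, h2, _⟩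
      · exact G.irrefl h3
      · exact h2 h1
      · exact h2 h1

/-- If `G` (with no isolated vertices) admits a `K_d`-edge partition of cost `k ≥ 1`
(`d ≥ 2`), then some exclusive vertex split of `G` produces a graph admitting a
`K_d`-edge partition of cost `k - 1`. -/
theorem stmt11 {V : Type*} [Fintype V] [DecidableEq V] (d : ℕ) (hd : 2 ≤ d)
    (G : SimpleGraph V) (hiso : ∀ v : V, (G.neighborSet v).Nonempty)
    (P : Finset (Finset V)) (k : ℕ) (hk : 1 ≤ k)
    (hP : KEdgePartition G d P) (hcost : costP P = k) :
    ∃ (u : V) (A B : Set V), A ∪ B = G.neighborSet u ∧ A ∩ B = ∅ ∧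
      ∃ P' : Finset (Finset (Option V)),
        KEdgePartition (splitGraph G u A B) d P' ∧ costP P' = k - 1 := by
  classical
  -- find a vertex of frequency ≥ 2
  have hex : ∃ u : V, 2 ≤ freqP P u := by
    by_contra h
    push_neg at h
    have h0 : costP P = 0 := Finset.sum_eq_zero fun v _ => by have := h v; omega
    omega
  obtain ⟨u, hu2⟩ := hex
  have hne : (P.filter fun Q => u ∈ Q).Nonempty :=
    Finset.card_pos.mp (by unfold freqP at hu2; omega)
  obtain ⟨Q₀, hQ₀f⟩ := hne
  rw [Finset.mem_filter] at hQ₀f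
  obtain ⟨hQ₀P, huQ₀⟩ := hQ₀f
  obtain ⟨hcl₀, hcard₀⟩ := hP.1 Q₀ hQ₀P
  set B : Set V := ↑(Q₀.erase u) with hBdef
  set A : Set V := G.neighborSet u \ B with hAdef
  have hBmem : ∀ b : V, b ∈ B ↔ b ≠ u ∧ b ∈ Q₀ := by
    intro b
    simp only [hBdef, Finset.mem_coe, Finset.mem_erase]
  have hBsub : B ⊆ G.neighborSet u := by
    intro b hb
    rw [hBmem] at hb
    exact hcl₀ (Finset.mem_coe.mpr huQ₀) (Finset.mem_coe.mpr hb.2) hb.1.symm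
  -- two distinct parts share at most one vertex
  have hinter : ∀ Q ∈ P, Q ≠ Q₀ → u ∈ Q → ∀ b ∈ Q, b ≠ u → b ∉ Q₀ := by
    intro Q hQ hQne huQ b hbQ hbu hbQ₀
    have hadj : G.Adj u b :=
      (hP.1 Q hQ).1 (Finset.mem_coe.mpr huQ) (Finset.mem_coe.mpr hbQ) (Ne.symm hbu)
    obtain ⟨R, _, hun⟩ := hP.2 u b hadj
    exact hQne ((hun Q ⟨hQ, huQ, hbQ⟩).trans (hun Q₀ ⟨hQ₀P, huQ₀, hbQ₀⟩).symm)
  set f : Finset V → Finset (Option V) :=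
    fun Q => if Q = Q₀ then insert none ((Q₀.erase u).image some) else Q.image some
    with hfdef
  have hf₀ : f Q₀ = insert none ((Q₀.erase u).image some) := by
    simp only [hfdef, if_pos rfl]
  have hfQ : ∀ Q, Q ≠ Q₀ → f Q = Q.image some := by
    intro Q h; simp only [hfdef, if_neg h]
  have hnone_mem : ∀ Q, none ∈ f Q ↔ Q = Q₀ := by
    intro Q
    by_cases h : Q = Q₀
    · subst h; simp [hf₀]
    · simp [hfQ Q h, h]
  have hsome_mem₀ : ∀ x : V, some x ∈ f Q₀ ↔ x ∈ Q₀ ∧ x ≠ u := by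
    intro x; simp [hf₀, Finset.mem_erase, and_comm]
  have hsome_mem : ∀ Q, Q ≠ Q₀ → ∀ x : V, (some x ∈ f Q ↔ x ∈ Q) := by
    intro Q h x; simp [hfQ Q h]
  have hback : ∀ Q, ∀ x : V, some x ∈ f Q → x ∈ Q := by
    intro Q x hx
    by_cases h : Q = Q₀
    · subst h; exact ((hsome_mem₀ x).mp hx).1
    · exact (hsome_mem Q h x).mp hx
  have hfinj : Set.InjOn f ↑P := by
    intro Q _ R _ hfeq
    by_cases hQ0 : Q = Q₀ <;> by_cases hR0 : R = Q₀
    · rw [hQ0, hR0]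
    · exact absurd ((hnone_mem R).mp (hfeq ▸ (hnone_mem Q).mpr hQ0)) hR0
    · exact absurd ((hnone_mem Q).mp (hfeq.symm ▸ (hnone_mem R).mpr hR0)) hQ0
    · exact Finset.image_injective (Option.some_injective V)
        (by rw [← hfQ Q hQ0, ← hfQ R hR0]; exact hfeq)
  -- the new partition
  have hP'1 : ∀ Q' ∈ P.image f, (splitGraph G u A B).IsClique ↑Q' ∧ Q'.card = d := by
    intro Q' hQ'
    obtain ⟨Q, hQ, rfl⟩ := Finset.mem_image.mp hQ'
    obtain ⟨hcl, hcard⟩ := hP.1 Q hQ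
    by_cases hQ0 : Q = Q₀
    · subst hQ0
      constructor
      · rintro (_ | a) hx (_ | b) hy hxy
        · exact absurd rfl hxy
        · rw [Finset.mem_coe, hsome_mem₀] at hy
          exact ⟨hy.2, (hBmem b).mpr ⟨hy.2, hy.1⟩⟩
        · rw [Finset.mem_coe, hsome_mem₀] at hx
          exact ⟨hx.2, (hBmem a).mpr ⟨hx.2, hx.1⟩⟩
        · rw [Finset.mem_coe, hsome_mem₀] at hx hy
          have hab : a ≠ b := fun h => hxy (by rw [h])
          exact Or.inl ⟨hx.2, hy.2,
            hcl₀ (Finset.mem_coe.mpr hx.1) (Finset.mem_coe.mpr hy.1) hab⟩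
      · rw [hf₀, Finset.card_insert_of_notMem (by simp),
          Finset.card_image_of_injective _ (Option.some_injective V),
          Finset.card_erase_of_mem huQ₀, hcard₀]
        omega
    · constructor
      · rintro (_ | a) hx (_ | b) hy hxy
        · exact absurd rfl hxy
        · rw [Finset.mem_coe, hnone_mem] at hx; exact absurd hx hQ0
        · rw [Finset.mem_coe, hnone_mem] at hy; exact absurd hy hQ0
        · rw [Finset.mem_coe, hsome_mem Q hQ0] at hx hy
          have hab : a ≠ b := fun h => hxy (by rw [h])
          have hGab : G.Adj a b :=
            hcl (Finset.mem_coe.mpr hx) (Finset.mem_coe.mpr hy) hab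
          by_cases hau : a = u
          · have hbu : b ≠ u := fun h => hab (hau.trans h.symm)
            have hbB : b ∉ B := fun hbB =>
              hinter Q hQ hQ0 (hau ▸ hx) b hy hbu ((hBmem b).mp hbB).2
            exact Or.inr (Or.inl ⟨hau, hbu, ⟨hau ▸ hGab, hbB⟩⟩)
          · by_cases hbu : b = u
            · have haB : a ∉ B := fun haB =>
                hinter Q hQ hQ0 (hbu ▸ hy) a hx hau ((hBmem a).mp haB).2
              exact Or.inr (Or.inr ⟨hbu, hau, ⟨hbu ▸ hGab.symm, haB⟩⟩)
            · exact Or.inl ⟨hau, hbu, hGab⟩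
      · rw [hfQ Q hQ0, Finset.card_image_of_injective _ (Option.some_injective V), hcard]
  have hP'2 : ∀ x y : Option V, (splitGraph G u A B).Adj x y →
      ∃! Q' : Finset (Option V), Q' ∈ P.image f ∧ x ∈ Q' ∧ y ∈ Q' := by
    rintro (_ | a) (_ | b) hadj
    · exact hadj.elim
    · -- none, some b
      obtain ⟨hbu, hbB⟩ := hadj
      have hbQ₀ : b ∈ Q₀ := ((hBmem b).mp hbB).2
      refine ⟨f Q₀, ⟨Finset.mem_image_of_mem f hQ₀P, (hnone_mem Q₀).mpr rfl,
        (hsome_mem₀ b).mpr ⟨hbQ₀, hbu⟩⟩, ?_⟩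
      rintro R' ⟨hR', hnR', hbR'⟩
      obtain ⟨R, hR, rfl⟩ := Finset.mem_image.mp hR'
      rw [(hnone_mem R).mp hnR']
    · -- some a, none
      obtain ⟨hau, haB⟩ := hadj
      have haQ₀ : a ∈ Q₀ := ((hBmem a).mp haB).2
      refine ⟨f Q₀, ⟨Finset.mem_image_of_mem f hQ₀P, (hsome_mem₀ a).mpr ⟨haQ₀, hau⟩,
        (hnone_mem Q₀).mpr rfl⟩, ?_⟩
      rintro R' ⟨hR', haR', hnR'⟩
      obtain ⟨R, hR, rfl⟩ := Finset.mem_image.mp hR'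
      rw [(hnone_mem R).mp hnR']
    · -- some a, some b
      rcases hadj with ⟨hau, hbu, hGab⟩ | ⟨hau, hbu, hbA⟩ | ⟨hbu, hau, haA⟩
      · obtain ⟨Q, ⟨hQ, haQ, hbQ⟩, hun⟩ := hP.2 a b hGab
        refine ⟨f Q, ⟨Finset.mem_image_of_mem f hQ, ?_, ?_⟩, ?_⟩
        · by_cases h : Q = Q₀
          · subst h; exact (hsome_mem₀ a).mpr ⟨haQ, hau⟩
          · exact (hsome_mem Q h a).mpr haQ
        · by_cases h : Q = Q₀
          · subst h; exact (hsome_mem₀ b).mpr ⟨hbQ, hbu⟩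
          · exact (hsome_mem Q h b).mpr hbQ
        · rintro R' ⟨hR', haR', hbR'⟩
          obtain ⟨R, hR, rfl⟩ := Finset.mem_image.mp hR'
          exact congrArg f (hun R ⟨hR, hback R a haR', hback R b hbR'⟩)
      · rw [hau]
        obtain ⟨hGub, hbB⟩ := hbA
        obtain ⟨Q, ⟨hQ, huQ, hbQ⟩, hun⟩ := hP.2 u b hGub
        have hQne : Q ≠ Q₀ := fun h => hbB ((hBmem b).mpr ⟨hbu, h ▸ hbQ⟩)
        refine ⟨f Q, ⟨Finset.mem_image_of_mem f hQ, (hsome_mem Q hQne u).mpr huQ,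
          (hsome_mem Q hQne b).mpr hbQ⟩, ?_⟩
        rintro R' ⟨hR', huR', hbR'⟩
        obtain ⟨R, hR, rfl⟩ := Finset.mem_image.mp hR'
        exact congrArg f (hun R ⟨hR, hback R u huR', hback R b hbR'⟩)
      · rw [hbu]
        obtain ⟨hGua, haB⟩ := haA
        obtain ⟨Q, ⟨hQ, huQ, haQ⟩, hun⟩ := hP.2 u a hGua
        have hQne : Q ≠ Q₀ := fun h => haB ((hBmem a).mpr ⟨hau, h ▸ haQ⟩)
        refine ⟨f Q, ⟨Finset.mem_image_of_mem f hQ, (hsome_mem Q hQne a).mpr haQ,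
          (hsome_mem Q hQne u).mpr huQ⟩, ?_⟩
        rintro R' ⟨hR', haR', huR'⟩
        obtain ⟨R, hR, rfl⟩ := Finset.mem_image.mp hR'
        exact congrArg f (hun R ⟨hR, hback R u huR', hback R a haR'⟩)
  -- frequency computations
  have hcardfilter : ∀ x : Option V,
      freqP (P.image f) x = (P.filter fun Q => x ∈ f Q).card := by
    intro x
    unfold freqP
    have heq : (P.image f).filter (fun Q' => x ∈ Q') = (P.filter fun Q => x ∈ f Q).image f := by
      ext Q'
      simp only [Finset.mem_filter, Finset.mem_image]
      constructor
      · rintro ⟨⟨Q, hQ, rfl⟩, hx⟩; exact ⟨Q, ⟨hQ, hx⟩, rfl⟩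
      · rintro ⟨Q, ⟨hQ, hx⟩, rfl⟩; exact ⟨⟨Q, hQ, rfl⟩, hx⟩
    rw [heq, Finset.card_image_of_injOn
      (hfinj.mono (Finset.coe_subset.mpr (Finset.filter_subset _ _)))]
  have hP'none : freqP (P.image f) none = 1 := by
    rw [hcardfilter]
    have : (P.filter fun Q => (none : Option V) ∈ f Q) = {Q₀} := by
      ext Q
      simp only [Finset.mem_filter, Finset.mem_singleton, hnone_mem]
      exact ⟨fun h => h.2, fun h => ⟨h ▸ hQ₀P, h⟩⟩
    rw [this, Finset.card_singleton]
  have hP'u : freqP (P.image f) (some u) = freqP P u - 1 := by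
    rw [hcardfilter]
    have h2 : (P.filter fun Q => some u ∈ f Q) = (P.filter fun Q => u ∈ Q).erase Q₀ := by
      ext Q
      simp only [Finset.mem_filter, Finset.mem_erase]
      by_cases h : Q = Q₀
      · subst h; rw [hsome_mem₀]; simp
      · rw [hsome_mem Q h]; tauto
    rw [h2, Finset.card_erase_of_mem (Finset.mem_filter.mpr ⟨hQ₀P, huQ₀⟩)]
    rfl
  have hP'v : ∀ v : V, v ≠ u → freqP (P.image f) (some v) = freqP P v := by
    intro v hv
    rw [hcardfilter]
    unfold freqP
    congr 1
    apply Finset.filter_congr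
    intro Q _
    by_cases h : Q = Q₀
    · subst h; rw [hsome_mem₀]; simp [hv]
    · rw [hsome_mem Q h]
  refine ⟨u, A, B, Set.diff_union_of_subset hBsub, Set.diff_inter_self,
    P.image f, ⟨hP'1, hP'2⟩, ?_⟩
  -- cost computation
  have hsum : (∑ v : V, (freqP (P.image f) (some v) - 1)) + 1
      = ∑ v : V, (freqP P v - 1) := by
    rw [← Finset.add_sum_erase _ (fun v => freqP (P.image f) (some v) - 1) (Finset.mem_univ u),
        ← Finset.add_sum_erase _ (fun v => freqP P v - 1) (Finset.mem_univ u)]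
    have heq : (∑ v ∈ Finset.univ.erase u, (freqP (P.image f) (some v) - 1))
        = ∑ v ∈ Finset.univ.erase u, (freqP P v - 1) :=
      Finset.sum_congr rfl fun v hv => by rw [hP'v v (Finset.mem_erase.mp hv).1]
    rw [hP'u, heq]
    omega
  unfold costP at hcost ⊢
  rw [Fintype.sum_option, hP'none]
  omega


end Paper
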